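/- arXiv:1607.03280 — 2 statements merged into one kernel-verified Lean document; each statement's English description precedes it below -/
import Mathlib

section
/- Let μ ∈ ℝ, σ > 0, and γ(t) = 10^{(√2 σ t + μ)/10}. Then for every s ≥ 0, ∫₀^∞ exp(−s g) · ((1/√π) ∫_{−∞}^{∞} (1/γ(t)) exp(−g/γ(t)) exp(−t²) dt) dg = (1/√π) ∫_{−∞}^{∞} exp(−t²)/(1 + s γ(t)) dt. -/
open Real MeasureTheory

open Set

lemma exp_int (r : ℝ) (hr : 0 < r) : ∫ t in Set.Ioi (0:ℝ), Real.exp (-(r*t)) = 1/r := by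
  have h := integral_rpow_mul_exp_neg_mul_Ioi (a := 1) one_pos hr
  simpa using h

noncomputable def gam (μ σ t : ℝ) : ℝ := (10 : ℝ) ^ ((Real.sqrt 2 * σ * t + μ) / 10)

lemma gam_pos (μ σ t : ℝ) : 0 < gam μ σ t := Real.rpow_pos_of_pos (by norm_num) _

lemma gam_eq (μ σ t : ℝ) :
    gam μ σ t = Real.exp (Real.log 10 * ((Real.sqrt 2 * σ * t + μ) / 10)) :=
  Real.rpow_def_of_pos (by norm_num) _

lemma gam_continuous (μ σ : ℝ) : Continuous (gam μ σ) := by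
  simp only [funext (gam_eq μ σ)]
  fun_prop

noncomputable def Fs (s μ σ g t : ℝ) : ℝ :=
  Real.exp (-s * g) * ((1 / gam μ σ t) * Real.exp (-g / gam μ σ t) * Real.exp (-t ^ 2))

lemma Fs_nonneg (s μ σ g t : ℝ) : 0 ≤ Fs s μ σ g t := by
  have := gam_pos μ σ t
  unfold Fs; positivity

lemma Fs_cont (s μ σ : ℝ) : Continuous fun p : ℝ × ℝ => Fs s μ σ p.1 p.2 := by
  unfold Fs
  have hγ : Continuous fun p : ℝ × ℝ => gam μ σ p.2 := (gam_continuous μ σ).comp continuous_snd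
  have hne : ∀ p : ℝ × ℝ, gam μ σ p.2 ≠ 0 := fun p => (gam_pos μ σ p.2).ne'
  apply Continuous.mul (by fun_prop)
  apply Continuous.mul
  apply Continuous.mul
  · exact continuous_const.div hγ hne
  · exact Real.continuous_exp.comp ((continuous_fst.neg).div hγ hne)
  · fun_prop

lemma expand (s a E g : ℝ) (ha : 0 < a) :
    Real.exp (-s*g) * ((1/a) * Real.exp (-g/a) * E)
      = ((1/a) * E) * Real.exp (-(s + 1/a) * g) := by
  have h1 : -(s + 1/a) * g = (-s*g) + (-g/a) := by field_simp; ring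
  rw [h1, Real.exp_add]; ring

lemma inner_int' (s a E : ℝ) (hs : 0 ≤ s) (ha : 0 < a) :
    ∫ g in Set.Ioi (0:ℝ), Real.exp (-s*g) * ((1/a) * Real.exp (-g/a) * E)
      = E / (1 + s*a) := by
  have hr : 0 < s + 1/a := by positivity
  simp_rw [expand s a E _ ha]
  simp_rw [neg_mul]
  rw [MeasureTheory.integral_const_mul, exp_int _ hr]
  have ha' : a ≠ 0 := ne_of_gt ha
  have h2 : s + 1/a = (1 + s*a)/a := by field_simp; ring
  rw [h2, one_div_div]
  field_simp

lemma section_integrable (s μ σ t : ℝ) (hs : 0 ≤ s) :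
    IntegrableOn (fun g => Fs s μ σ g t) (Set.Ioi (0:ℝ)) := by
  have ha := gam_pos μ σ t
  have hr : 0 < s + 1 / gam μ σ t := by positivity
  have : (fun g => Fs s μ σ g t)
      = fun g => ((1 / gam μ σ t) * Real.exp (-t ^ 2)) * Real.exp (-(s + 1/gam μ σ t) * g) :=
    funext fun g => expand s _ _ g ha
  rw [this]
  exact (exp_neg_integrableOn_Ioi 0 hr).const_mul _

lemma Fs_integral (s μ σ t : ℝ) (hs : 0 ≤ s) :
    ∫ g in Set.Ioi (0:ℝ), Fs s μ σ g t = Real.exp (-t ^ 2) / (1 + s * gam μ σ t) :=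
  inner_int' s _ _ hs (gam_pos μ σ t)

lemma norm_Fs_integral (s μ σ t : ℝ) (hs : 0 ≤ s) :
    (∫ g in Set.Ioi (0:ℝ), ‖Fs s μ σ g t‖) = Real.exp (-t ^ 2) / (1 + s * gam μ σ t) := by
  have : ∀ g, ‖Fs s μ σ g t‖ = Fs s μ σ g t := fun g => norm_of_nonneg (Fs_nonneg s μ σ g t)
  simp_rw [this]
  exact Fs_integral s μ σ t hs

lemma quotient_integrable (s μ σ : ℝ) (hs : 0 ≤ s) :
    Integrable (fun t : ℝ => Real.exp (-t ^ 2) / (1 + s * gam μ σ t)) := by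
  have hbound : Integrable fun t : ℝ => Real.exp (-t ^ 2) := by
    simpa using integrable_exp_neg_mul_sq (one_pos)
  have hden : ∀ t : ℝ, (0:ℝ) < 1 + s * gam μ σ t := fun t => by
    have := gam_pos μ σ t; positivity
  refine hbound.mono ?_ ?_
  · apply Continuous.aestronglyMeasurable
    exact (by fun_prop : Continuous fun t:ℝ => Real.exp (-t^2)).div
      (by exact continuous_const.add (continuous_const.mul (gam_continuous μ σ)))
      (fun t => (hden t).ne')
  · refine Filter.Eventually.of_forall fun t => ?_
    have h1 : (1:ℝ) ≤ 1 + s * gam μ σ t := by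
      have := (gam_pos μ σ t).le; nlinarith
    rw [Real.norm_eq_abs, Real.norm_eq_abs, abs_of_nonneg (by positivity),
      abs_of_nonneg (Real.exp_pos _).le]
    calc Real.exp (-t^2) / (1 + s * gam μ σ t) ≤ Real.exp (-t^2) / 1 := by
          apply div_le_div_of_nonneg_left (Real.exp_pos _).le one_pos h1
      _ = Real.exp (-t^2) := div_one _

lemma prod_integrable (s μ σ : ℝ) (hs : 0 ≤ s) :
    Integrable (Function.uncurry (Fs s μ σ))
      ((volume.restrict (Set.Ioi (0:ℝ))).prod volume) := by
  have hmeas : AEStronglyMeasurable (Function.uncurry (Fs s μ σ))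
      ((volume.restrict (Set.Ioi (0:ℝ))).prod volume) :=
    (Fs_cont s μ σ).aestronglyMeasurable
  rw [integrable_prod_iff' hmeas]
  constructor
  · exact Filter.Eventually.of_forall fun t => section_integrable s μ σ t hs
  · have : (fun t : ℝ => ∫ g in Set.Ioi (0:ℝ), ‖Function.uncurry (Fs s μ σ) (g, t)‖)
        = fun t : ℝ => Real.exp (-t ^ 2) / (1 + s * gam μ σ t) :=
      funext fun t => norm_Fs_integral s μ σ t hs
    rw [this]
    exact quotient_integrable s μ σ hs

/-- Exact moment generating function (Laplace transform) of the Rayleigh–Lognormal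
(Suzuki) fading density with `γ(t) = 10^{(√2 σ t + μ)/10}`:
`∫₀^∞ e^{−sg} (1/√π) ∫_ℝ (1/γ(t)) e^{−g/γ(t)} e^{−t²} dt dg
  = (1/√π) ∫_ℝ e^{−t²}/(1 + s γ(t)) dt`. -/
theorem suzuki_mgf (μ σ : ℝ) (hσ : 0 < σ) :
    ∀ s : ℝ, 0 ≤ s →
      (∫ g in Set.Ioi (0 : ℝ),
          Real.exp (-s * g) *
            ((1 / Real.sqrt π) *
              ∫ t : ℝ, (1 / (10 : ℝ) ^ ((Real.sqrt 2 * σ * t + μ) / 10)) *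
                Real.exp (-g / (10 : ℝ) ^ ((Real.sqrt 2 * σ * t + μ) / 10)) *
                Real.exp (-t ^ 2))) =
        (1 / Real.sqrt π) *
          ∫ t : ℝ, Real.exp (-t ^ 2) / (1 + s * (10 : ℝ) ^ ((Real.sqrt 2 * σ * t + μ) / 10)) := by
  intro s hs
  calc (∫ g in Set.Ioi (0 : ℝ),
          Real.exp (-s * g) *
            ((1 / Real.sqrt π) *
              ∫ t : ℝ, (1 / (10 : ℝ) ^ ((Real.sqrt 2 * σ * t + μ) / 10)) *
                Real.exp (-g / (10 : ℝ) ^ ((Real.sqrt 2 * σ * t + μ) / 10)) *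
                Real.exp (-t ^ 2)))
      = ∫ g in Set.Ioi (0:ℝ), (1 / Real.sqrt π) * ∫ t : ℝ, Fs s μ σ g t := by
        refine setIntegral_congr_fun measurableSet_Ioi fun g _ => ?_
        rw [show Real.exp (-s * g) *
            ((1 / Real.sqrt π) *
              ∫ t : ℝ, (1 / (10 : ℝ) ^ ((Real.sqrt 2 * σ * t + μ) / 10)) *
                Real.exp (-g / (10 : ℝ) ^ ((Real.sqrt 2 * σ * t + μ) / 10)) *
                Real.exp (-t ^ 2))
          = (1 / Real.sqrt π) * (Real.exp (-s * g) *
              ∫ t : ℝ, (1 / (10 : ℝ) ^ ((Real.sqrt 2 * σ * t + μ) / 10)) *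
                Real.exp (-g / (10 : ℝ) ^ ((Real.sqrt 2 * σ * t + μ) / 10)) *
                Real.exp (-t ^ 2)) from by ring]
        rw [← MeasureTheory.integral_const_mul]
        congr 1
    _ = (1 / Real.sqrt π) * ∫ g in Set.Ioi (0:ℝ), ∫ t : ℝ, Fs s μ σ g t :=
        MeasureTheory.integral_const_mul _ _
    _ = (1 / Real.sqrt π) * ∫ t : ℝ, ∫ g in Set.Ioi (0:ℝ), Fs s μ σ g t := by
        rw [MeasureTheory.integral_integral_swap (prod_integrable s μ σ hs)]
    _ = (1 / Real.sqrt π) *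
          ∫ t : ℝ, Real.exp (-t ^ 2) / (1 + s * (10 : ℝ) ^ ((Real.sqrt 2 * σ * t + μ) / 10)) := by
        congr 1
        refine integral_congr_ae (Filter.Eventually.of_forall fun t => ?_)
        exact Fs_integral s μ σ t hs
end

section
/- Let λ > 0, ε ≥ 0, N ∈ ℕ, and for n = 1,…,N let wₙ > 0 and fₙ ≥ 0. Then ∫₀^∞ 2πλ r exp(−πλ r²) · Σₙ (wₙ/√π) exp(−πλ ε r² fₙ) dr = Σₙ (wₙ/√π) · 1/(1 + ε fₙ). In particular, the value of this integral does not depend on λ. -/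
open Real MeasureTheory

lemma key_gauss {b : ℝ} (hb : 0 < b) :
    ∫ r in Set.Ioi (0 : ℝ), r * Real.exp (-(b * r ^ 2)) = (2 * b)⁻¹ := by
  have h := integral_mul_cexp_neg_mul_sq (b := (b : ℂ)) (by simpa using hb)
  have heq : ∀ r : ℝ, (r : ℂ) * Complex.exp (-(b : ℂ) * (r : ℂ) ^ 2)
      = ((r * Real.exp (-(b * r ^ 2)) : ℝ) : ℂ) := by
    intro r
    push_cast [Complex.ofReal_exp]
    ring_nf
  simp_rw [heq] at h
  have h' : ∫ r in Set.Ioi (0:ℝ), ((r * Real.exp (-(b * r ^ 2)) : ℝ) : ℂ)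
      = (((2 * b)⁻¹ : ℝ) : ℂ) := by rw [h]; push_cast; ring
  apply Complex.ofReal_injective
  rw [← h']
  exact (integral_ofReal (𝕜 := ℂ)).symm

/-- Average coverage probability of a typical user in the interference-limited
Poisson cellular network:
`∫₀^∞ 2πλ r e^{−πλr²} Σₙ (wₙ/√π) e^{−πλ ε r² fₙ} dr = Σₙ (wₙ/√π)/(1 + ε fₙ)`,
independent of the base-station density `λ`. -/
theorem average_coverage_high_snr (lam ε : ℝ) (hlam : 0 < lam) (hε : 0 ≤ ε)
    (N : ℕ) (w f : Fin N → ℝ) (hw : ∀ n, 0 < w n) (hf : ∀ n, 0 ≤ f n) :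
    (∫ r in Set.Ioi (0 : ℝ),
        2 * π * lam * r * Real.exp (-(π * lam * r ^ 2)) *
          ∑ n, (w n / Real.sqrt π) * Real.exp (-(π * lam * ε * r ^ 2 * f n))) =
      ∑ n, (w n / Real.sqrt π) * (1 / (1 + ε * f n)) := by
  have hb : ∀ n : Fin N, 0 < π * lam * (1 + ε * f n) := by
    intro n
    have h1 : (0:ℝ) < 1 + ε * f n := by
      have := mul_nonneg hε (hf n); linarith
    positivity
  have hrew : ∀ n : Fin N, ∀ r : ℝ,
      2 * π * lam * r * Real.exp (-(π * lam * r ^ 2)) *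
        ((w n / Real.sqrt π) * Real.exp (-(π * lam * ε * r ^ 2 * f n)))
      = (2 * π * lam * (w n / Real.sqrt π)) *
          (r * Real.exp (-(π * lam * (1 + ε * f n) * r ^ 2))) := by
    intro n r
    have h2 : Real.exp (-(π * lam * r ^ 2)) * Real.exp (-(π * lam * ε * r ^ 2 * f n))
        = Real.exp (-(π * lam * (1 + ε * f n) * r ^ 2)) := by
      rw [← Real.exp_add]; ring_nf
    calc 2 * π * lam * r * Real.exp (-(π * lam * r ^ 2)) *
        ((w n / Real.sqrt π) * Real.exp (-(π * lam * ε * r ^ 2 * f n)))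
        = (2 * π * lam * (w n / Real.sqrt π)) *
          (r * (Real.exp (-(π * lam * r ^ 2)) * Real.exp (-(π * lam * ε * r ^ 2 * f n)))) := by ring
      _ = _ := by rw [h2]
  simp_rw [Finset.mul_sum]
  rw [MeasureTheory.integral_finset_sum]
  · refine Finset.sum_congr rfl fun n _ => ?_
    simp_rw [hrew n]
    rw [MeasureTheory.integral_const_mul, key_gauss (hb n)]
    have h1 : (0:ℝ) < 1 + ε * f n := by
      have := mul_nonneg hε (hf n); linarith
    have hπ : (0:ℝ) < π := Real.pi_pos
    field_simp
  · intro n _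
    have : Integrable (fun r : ℝ => r * Real.exp (-(π * lam * (1 + ε * f n)) * r ^ 2)) :=
      integrable_mul_exp_neg_mul_sq (hb n)
    have hI := (this.integrableOn (s := Set.Ioi 0)).const_mul (2 * π * lam * (w n / Real.sqrt π))
    refine hI.congr (Filter.Eventually.of_forall fun r => ?_)
    simpa [neg_mul] using (hrew n r).symm
end
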